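/- Let Ω ⊆ ℝ³ be open, p, q : Ω → ℂ with p ∈ C²(Ω), p nonvanishing, and let u₀ be a nonvanishing C² solution of div(p grad u₀) + q u₀ = 0 in Ω. Set f = p^{1/2}u₀ (for a fixed continuous branch of the square root). Then for every scalar φ ∈ C²(Ω): div(p grad φ) + qφ = -p^{1/2}(D + M^{Df/f})(D - M^{Df/f})(p^{1/2}φ). -/

import Mathlib

noncomputable section

/-- ℝ³ -/
abbrev V3 := Fin 3 → ℝ
/-- Complex quaternions ℍ(ℂ) -/
abbrev HC := Quaternion ℂ

/-- partial derivative ∂ₖ of a function on ℝ³ -/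
noncomputable def pd {E : Type*} [NormedAddCommGroup E] [NormedSpace ℝ E]
    (k : Fin 3) (g : V3 → E) (x : V3) : E :=
  fderiv ℝ g x (Pi.single k 1)

noncomputable def grad {E : Type*} [NormedAddCommGroup E] [NormedSpace ℝ E]
    (g : V3 → E) (x : V3) : Fin 3 → E := fun k => pd k g x

noncomputable def dvg {E : Type*} [NormedAddCommGroup E] [NormedSpace ℝ E]
    (F : V3 → Fin 3 → E) (x : V3) : E :=
  pd 0 (fun y => F y 0) x + pd 1 (fun y => F y 1) x + pd 2 (fun y => F y 2) x

noncomputable def rot {E : Type*} [NormedAddCommGroup E] [NormedSpace ℝ E]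
    (F : V3 → Fin 3 → E) (x : V3) : Fin 3 → E :=
  ![pd 1 (fun y => F y 2) x - pd 2 (fun y => F y 1) x,
    pd 2 (fun y => F y 0) x - pd 0 (fun y => F y 2) x,
    pd 0 (fun y => F y 1) x - pd 1 (fun y => F y 0) x]

/-- scalar Laplacian -/
noncomputable def lapS {E : Type*} [NormedAddCommGroup E] [NormedSpace ℝ E]
    (g : V3 → E) (x : V3) : E :=
  pd 0 (pd 0 g) x + pd 1 (pd 1 g) x + pd 2 (pd 2 g) x

/-- purely vectorial quaternion from a ℂ³ vector -/
def vecq (v : Fin 3 → ℂ) : HC := ⟨0, v 0, v 1, v 2⟩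
/-- scalar quaternion -/
def scq (a : ℂ) : HC := ⟨a, 0, 0, 0⟩

def e1 : HC := ⟨0,1,0,0⟩
def e2 : HC := ⟨0,0,1,0⟩
def e3 : HC := ⟨0,0,0,1⟩

/-- vector part of a quaternion, as a ℂ³ vector -/
def vecPart (a : HC) : Fin 3 → ℂ := ![a.imI, a.imJ, a.imK]

/-- quaternionic conjugation C_H -/
def qconj (a : HC) : HC := ⟨a.re, -a.imI, -a.imJ, -a.imK⟩

/-- componentwise partial derivative of an ℍ(ℂ)-valued function -/
noncomputable def qpd (k : Fin 3) (F : V3 → HC) (x : V3) : HC :=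
  ⟨pd k (fun y => (F y).re) x, pd k (fun y => (F y).imI) x,
   pd k (fun y => (F y).imJ) x, pd k (fun y => (F y).imK) x⟩

/-- The Moisil–Teodorescu (Dirac) operator D = Σₖ iₖ∂ₖ -/
noncomputable def Dq (F : V3 → HC) (x : V3) : HC :=
  e1 * qpd 0 F x + e2 * qpd 1 F x + e3 * qpd 2 F x

/-- componentwise Laplacian of an ℍ(ℂ)-valued function -/
noncomputable def qlap (F : V3 → HC) (x : V3) : HC :=
  qpd 0 (qpd 0 F) x + qpd 1 (qpd 1 F) x + qpd 2 (qpd 2 F) x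

/-- ContDiffOn for ℍ(ℂ)-valued functions, componentwise -/
def QContDiffOn (n : ℕ∞) (F : V3 → HC) (s : Set V3) : Prop :=
  ContDiffOn ℝ n (fun x => (F x).re) s ∧ ContDiffOn ℝ n (fun x => (F x).imI) s ∧
  ContDiffOn ℝ n (fun x => (F x).imJ) s ∧ ContDiffOn ℝ n (fun x => (F x).imK) s

/-- euclidean norm on ℝ³ -/
noncomputable def nrm (x : V3) : ℝ := Real.sqrt (x 0 ^ 2 + x 1 ^ 2 + x 2 ^ 2)

/-- fundamental solution of the Helmholtz operator -/
noncomputable def theta (α : ℂ) (x : V3) : ℂ :=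
  -Complex.exp (Complex.I * α * (nrm x : ℂ)) / (4 * Real.pi * (nrm x : ℂ))

/-- x as a purely vectorial quaternion -/
def xq (x : V3) : HC := vecq fun k => ((x k : ℝ) : ℂ)


section Helpers
variable {x : V3} {a b : V3 → ℂ} {k j : Fin 3}

theorem pd_congr_nhds (h : a =ᶠ[nhds x] b) (k : Fin 3) : pd k a x = pd k b x := by
  unfold pd; rw [Filter.EventuallyEq.fderiv_eq h]

theorem pd_add (ha : DifferentiableAt ℝ a x) (hb : DifferentiableAt ℝ b x) :
    pd k (fun y => a y + b y) x = pd k a x + pd k b x := by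
  unfold pd; rw [fderiv_fun_add ha hb]; simp

theorem pd_mul (ha : DifferentiableAt ℝ a x) (hb : DifferentiableAt ℝ b x) :
    pd k (fun y => a y * b y) x = pd k a x * b x + a x * pd k b x := by
  unfold pd; rw [fderiv_fun_mul ha hb]; simp [smul_eq_mul]; ring

theorem pd_inv (ha : DifferentiableAt ℝ a x) (h0 : a x ≠ 0) :
    pd k (fun y => (a y)⁻¹) x = -pd k a x / a x ^ 2 := by
  have h1 := ((hasFDerivAt_inv h0).restrictScalars ℝ).comp x ha.hasFDerivAt
  have h2 : HasFDerivAt (fun y => (a y)⁻¹) _ x := h1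
  unfold pd
  rw [h2.fderiv]
  simp [smul_eq_mul]
  field_simp

theorem diff_pd (hh : ContDiffAt ℝ 2 a x) (k : Fin 3) :
    DifferentiableAt ℝ (fun y => pd k a y) x := by
  have h1 : ContDiffAt ℝ 1 (fderiv ℝ a) x := hh.fderiv_right (by norm_num)
  exact (h1.differentiableAt one_ne_zero).clm_apply (differentiableAt_const _)

theorem pd_pd_symm (hh : ContDiffAt ℝ 2 a x) (j k : Fin 3) :
    pd j (fun y => pd k a y) x = pd k (fun y => pd j a y) x := by
  have hd : DifferentiableAt ℝ (fderiv ℝ a) x :=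
    (hh.fderiv_right (m := 1) (by norm_num)).differentiableAt one_ne_zero
  have key : ∀ v : V3, fderiv ℝ (fun y => fderiv ℝ a y v) x
      = (fderiv ℝ (fderiv ℝ a) x).flip v := by
    intro v
    rw [fderiv_clm_apply hd (differentiableAt_const v)]; simp
  unfold pd
  rw [key, key]
  exact (hh.isSymmSndFDerivAt (by norm_num)) _ _

theorem pd_zero : pd k (fun _ : V3 => (0:ℂ)) x = 0 := by
  simp [pd]

theorem pd_sub (ha : DifferentiableAt ℝ a x) (hb : DifferentiableAt ℝ b x) :
    pd k (fun y => a y - b y) x = pd k a x - pd k b x := by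
  unfold pd; rw [fderiv_fun_sub ha hb]; simp

theorem pd_div (ha : DifferentiableAt ℝ a x) (hb : DifferentiableAt ℝ b x) (h0 : b x ≠ 0) :
    pd k (fun y => a y / b y) x = (pd k a x * b x - a x * pd k b x) / b x ^ 2 := by
  have : (fun y => a y / b y) = fun y => a y * (b y)⁻¹ := by
    funext y; rw [div_eq_mul_inv]
  rw [this, pd_mul (b := fun y => (b y)⁻¹) ha (hb.inv h0), pd_inv hb h0]
  field_simp
  ring

theorem vecq_re (v : Fin 3 → ℂ) : (vecq v).re = 0 := rfl
theorem vecq_imI (v : Fin 3 → ℂ) : (vecq v).imI = v 0 := rfl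
theorem vecq_imJ (v : Fin 3 → ℂ) : (vecq v).imJ = v 1 := rfl
theorem vecq_imK (v : Fin 3 → ℂ) : (vecq v).imK = v 2 := rfl
theorem scq_re (a : ℂ) : (scq a).re = a := rfl
theorem scq_imI (a : ℂ) : (scq a).imI = 0 := rfl
theorem scq_imJ (a : ℂ) : (scq a).imJ = 0 := rfl
theorem scq_imK (a : ℂ) : (scq a).imK = 0 := rfl
theorem e1_re : e1.re = 0 := rfl
theorem e1_imI : e1.imI = 1 := rfl
theorem e1_imJ : e1.imJ = 0 := rfl
theorem e1_imK : e1.imK = 0 := rfl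
theorem e2_re : e2.re = 0 := rfl
theorem e2_imI : e2.imI = 0 := rfl
theorem e2_imJ : e2.imJ = 1 := rfl
theorem e2_imK : e2.imK = 0 := rfl
theorem e3_re : e3.re = 0 := rfl
theorem e3_imI : e3.imI = 0 := rfl
theorem e3_imJ : e3.imJ = 0 := rfl
theorem e3_imK : e3.imK = 1 := rfl
theorem qpd_re (k : Fin 3) (F : V3 → HC) (x : V3) :
    (qpd k F x).re = pd k (fun y => (F y).re) x := rfl
theorem qpd_imI (k : Fin 3) (F : V3 → HC) (x : V3) :
    (qpd k F x).imI = pd k (fun y => (F y).imI) x := rfl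
theorem qpd_imJ (k : Fin 3) (F : V3 → HC) (x : V3) :
    (qpd k F x).imJ = pd k (fun y => (F y).imJ) x := rfl
theorem qpd_imK (k : Fin 3) (F : V3 → HC) (x : V3) :
    (qpd k F x).imK = pd k (fun y => (F y).imK) x := rfl

end Helpers

set_option maxHeartbeats 2000000 in
/-- factorization of div p grad + q:
div(p grad φ) + qφ = -p^{1/2}(D + M^{Df/f})(D - M^{Df/f})(p^{1/2}φ), f = p^{1/2}u₀. -/
theorem stmt14 (Ω : Set V3) (hΩ : IsOpen Ω) (p q u₀ sq : V3 → ℂ)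
    (hp : ContDiffOn ℝ 2 p Ω) (hp0 : ∀ x ∈ Ω, p x ≠ 0)
    (hsq : ContDiffOn ℝ 2 sq Ω) (hsq2 : ∀ x ∈ Ω, sq x ^ 2 = p x)
    (hu : ContDiffOn ℝ 2 u₀ Ω) (hu0 : ∀ x ∈ Ω, u₀ x ≠ 0)
    (hueq : ∀ x ∈ Ω, dvg (fun y k => p y * pd k u₀ y) x + q x * u₀ x = 0)
    (φ : V3 → ℂ) (hφ : ContDiffOn ℝ 2 φ Ω) :
    ∀ x ∈ Ω,
      scq (dvg (fun y k => p y * pd k φ y) x + q x * φ x)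
      = -(sq x) •
        (Dq (fun y => vecq (grad (fun z => sq z * φ z) y)
              - scq (sq y * φ y)
                * vecq fun k => grad (fun z => sq z * u₀ z) y k / (sq y * u₀ y)) x
          + (vecq (grad (fun z => sq z * φ z) x)
              - scq (sq x * φ x)
                * vecq fun k => grad (fun z => sq z * u₀ z) x k / (sq x * u₀ x))
            * vecq fun k => grad (fun z => sq z * u₀ z) x k / (sq x * u₀ x)) := by
  intro x hx
  have hmem : Ω ∈ nhds x := hΩ.mem_nhds hx
  -- pointwise smoothness / differentiability facts
  have hsq2x : ContDiffAt ℝ 2 sq x := hsq.contDiffAt hmem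
  have hu2x : ContDiffAt ℝ 2 u₀ x := hu.contDiffAt hmem
  have hφ2x : ContDiffAt ℝ 2 φ x := hφ.contDiffAt hmem
  have hp2x : ContDiffAt ℝ 2 p x := hp.contDiffAt hmem
  have hsqd : DifferentiableAt ℝ sq x := hsq2x.differentiableAt two_ne_zero
  have hud : DifferentiableAt ℝ u₀ x := hu2x.differentiableAt two_ne_zero
  have hφd : DifferentiableAt ℝ φ x := hφ2x.differentiableAt two_ne_zero
  have hpd : DifferentiableAt ℝ p x := hp2x.differentiableAt two_ne_zero
  have hsx : sq x ≠ 0 := by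
    intro h
    exact hp0 x hx (by rw [← hsq2 x hx, h]; ring)
  have hux : u₀ x ≠ 0 := hu0 x hx
  have hf2x : ContDiffAt ℝ 2 (fun y => sq y * u₀ y) x := hsq2x.mul hu2x
  have hg2x : ContDiffAt ℝ 2 (fun y => sq y * φ y) x := hsq2x.mul hφ2x
  have hfd : DifferentiableAt ℝ (fun y => sq y * u₀ y) x := hsqd.mul hud
  have hgd : DifferentiableAt ℝ (fun y => sq y * φ y) x := hsqd.mul hφd
  have hf0 : sq x * u₀ x ≠ 0 := mul_ne_zero hsx hux
  -- first derivatives of f = sq*u₀ and g = sq*φ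
  have h1f : ∀ j : Fin 3, pd j (fun z => sq z * u₀ z) x
      = pd j sq x * u₀ x + sq x * pd j u₀ x := fun j => pd_mul hsqd hud
  have h1g : ∀ j : Fin 3, pd j (fun z => sq z * φ z) x
      = pd j sq x * φ x + sq x * pd j φ x := fun j => pd_mul hsqd hφd
  -- second derivatives of f and g
  have h2f : ∀ j k : Fin 3, pd j (fun y => pd k (fun z => sq z * u₀ z) y) x
      = pd j (fun y => pd k sq y) x * u₀ x + pd k sq x * pd j u₀ x
        + pd j sq x * pd k u₀ x + sq x * pd j (fun y => pd k u₀ y) x := by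
    intro j k
    have he : (fun y => pd k (fun z => sq z * u₀ z) y)
        =ᶠ[nhds x] fun y => pd k sq y * u₀ y + sq y * pd k u₀ y := by
      filter_upwards [hmem] with y hy
      exact pd_mul ((hsq.contDiffAt (hΩ.mem_nhds hy)).differentiableAt two_ne_zero)
        ((hu.contDiffAt (hΩ.mem_nhds hy)).differentiableAt two_ne_zero)
    rw [pd_congr_nhds he j,
      pd_add ((diff_pd hsq2x k).fun_mul hud) (hsqd.fun_mul (diff_pd hu2x k)),
      pd_mul (diff_pd hsq2x k) hud, pd_mul hsqd (diff_pd hu2x k)]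
    ring
  have h2g : ∀ j k : Fin 3, pd j (fun y => pd k (fun z => sq z * φ z) y) x
      = pd j (fun y => pd k sq y) x * φ x + pd k sq x * pd j φ x
        + pd j sq x * pd k φ x + sq x * pd j (fun y => pd k φ y) x := by
    intro j k
    have he : (fun y => pd k (fun z => sq z * φ z) y)
        =ᶠ[nhds x] fun y => pd k sq y * φ y + sq y * pd k φ y := by
      filter_upwards [hmem] with y hy
      exact pd_mul ((hsq.contDiffAt (hΩ.mem_nhds hy)).differentiableAt two_ne_zero)
        ((hφ.contDiffAt (hΩ.mem_nhds hy)).differentiableAt two_ne_zero)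
    rw [pd_congr_nhds he j,
      pd_add ((diff_pd hsq2x k).fun_mul hφd) (hsqd.fun_mul (diff_pd hφ2x k)),
      pd_mul (diff_pd hsq2x k) hφd, pd_mul hsqd (diff_pd hφ2x k)]
    ring
  -- derivative of p in terms of sq
  have hPd : ∀ j : Fin 3, pd j p x = 2 * sq x * pd j sq x := by
    intro j
    have he : p =ᶠ[nhds x] fun y => sq y * sq y := by
      filter_upwards [hmem] with y hy
      rw [← hsq2 y hy]; ring
    rw [pd_congr_nhds he j, pd_mul hsqd hsqd]; ring
  have hP : sq x ^ 2 = p x := hsq2 x hx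
  -- the u₀ equation, expanded
  have hU : (2 * sq x * pd 0 sq x * pd 0 u₀ x + sq x ^ 2 * pd 0 (fun y => pd 0 u₀ y) x)
      + (2 * sq x * pd 1 sq x * pd 1 u₀ x + sq x ^ 2 * pd 1 (fun y => pd 1 u₀ y) x)
      + (2 * sq x * pd 2 sq x * pd 2 u₀ x + sq x ^ 2 * pd 2 (fun y => pd 2 u₀ y) x)
      + q x * u₀ x = 0 := by
    have h0 := hueq x hx
    simp only [dvg] at h0
    rw [pd_mul hpd (diff_pd hu2x 0), pd_mul hpd (diff_pd hu2x 1),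
      pd_mul hpd (diff_pd hu2x 2), hPd 0, hPd 1, hPd 2, ← hP] at h0
    linear_combination h0
  have hQ : q x = -((2 * sq x * pd 0 sq x * pd 0 u₀ x + sq x ^ 2 * pd 0 (fun y => pd 0 u₀ y) x)
      + (2 * sq x * pd 1 sq x * pd 1 u₀ x + sq x ^ 2 * pd 1 (fun y => pd 1 u₀ y) x)
      + (2 * sq x * pd 2 sq x * pd 2 u₀ x + sq x ^ 2 * pd 2 (fun y => pd 2 u₀ y) x)) / u₀ x := by
    field_simp
    linear_combination hU
  -- the mixed second derivative terms of B
  have hB : ∀ j k : Fin 3,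
      pd j (fun y => pd k (fun z => sq z * φ z) y
        - sq y * φ y * (pd k (fun z => sq z * u₀ z) y / (sq y * u₀ y))) x
      = pd j (fun y => pd k (fun z => sq z * φ z) y) x
        - (pd j sq x * φ x + sq x * pd j φ x) * (pd k (fun z => sq z * u₀ z) x / (sq x * u₀ x))
        - sq x * φ x * ((pd j (fun y => pd k (fun z => sq z * u₀ z) y) x * (sq x * u₀ x)
            - pd k (fun z => sq z * u₀ z) x * (pd j sq x * u₀ x + sq x * pd j u₀ x))
            / (sq x * u₀ x) ^ 2) := by
    intro j k
    have hwd : DifferentiableAt ℝ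
        (fun y => pd k (fun z => sq z * u₀ z) y / (sq y * u₀ y)) x := by
      simp only [div_eq_mul_inv]
      exact (diff_pd hf2x k).mul (hfd.inv hf0)
    rw [pd_sub (diff_pd hg2x k) (hgd.fun_mul hwd),
      pd_mul hgd hwd,
      pd_div (diff_pd hf2x k) hfd hf0, h1g j, h1f j]

    ring
  -- symmetry of second derivatives
  have hSsq := fun j k => pd_pd_symm hsq2x j k
  have hSu := fun j k => pd_pd_symm hu2x j k
  have hSφ := fun j k => pd_pd_symm hφ2x j k
  ext
  · -- scalar part
    simp only [Dq, qpd_re, qpd_imI, qpd_imJ, qpd_imK, Quaternion.re_add, Quaternion.imI_add, Quaternion.imJ_add, Quaternion.imK_add,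
      Quaternion.re_mul, Quaternion.imI_mul, Quaternion.imJ_mul, Quaternion.imK_mul,
      Quaternion.re_sub, Quaternion.imI_sub, Quaternion.imJ_sub, Quaternion.imK_sub,
      Quaternion.re_neg, Quaternion.imI_neg, Quaternion.imJ_neg, Quaternion.imK_neg,
      Quaternion.re_smul, Quaternion.imI_smul, Quaternion.imJ_smul, Quaternion.imK_smul,
      grad, vecq_re, vecq_imI, vecq_imJ, vecq_imK, scq_re, scq_imI, scq_imJ, scq_imK, dvg,
      e1_re, e1_imI, e1_imJ, e1_imK, e2_re, e2_imI, e2_imJ, e2_imK, e3_re, e3_imI, e3_imJ, e3_imK, smul_eq_mul, one_mul, mul_one,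
      zero_mul, mul_zero, sub_zero, zero_sub, add_zero, zero_add, neg_zero, neg_neg, pd_zero]
    rw [pd_mul hpd (diff_pd hφ2x 0), pd_mul hpd (diff_pd hφ2x 1), pd_mul hpd (diff_pd hφ2x 2)]
    simp only [hB 0 0, hB 1 1, hB 2 2, h2g 0 0, h2g 1 1, h2g 2 2, h2f 0 0, h2f 1 1, h2f 2 2,
      h1f 0, h1f 1, h1f 2, h1g 0, h1g 1, h1g 2, hPd 0, hPd 1, hPd 2, ← hP, hQ]
    rw [← sub_eq_zero]
    field_simp [hsx, hux]
    ring_nf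
  · -- imI part
    simp only [Dq, qpd_re, qpd_imI, qpd_imJ, qpd_imK, Quaternion.re_add, Quaternion.imI_add, Quaternion.imJ_add, Quaternion.imK_add,
      Quaternion.re_mul, Quaternion.imI_mul, Quaternion.imJ_mul, Quaternion.imK_mul,
      Quaternion.re_sub, Quaternion.imI_sub, Quaternion.imJ_sub, Quaternion.imK_sub,
      Quaternion.re_neg, Quaternion.imI_neg, Quaternion.imJ_neg, Quaternion.imK_neg,
      Quaternion.re_smul, Quaternion.imI_smul, Quaternion.imJ_smul, Quaternion.imK_smul,
      grad, vecq_re, vecq_imI, vecq_imJ, vecq_imK, scq_re, scq_imI, scq_imJ, scq_imK, dvg,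
      e1_re, e1_imI, e1_imJ, e1_imK, e2_re, e2_imI, e2_imJ, e2_imK, e3_re, e3_imI, e3_imJ, e3_imK, smul_eq_mul, one_mul, mul_one,
      zero_mul, mul_zero, sub_zero, zero_sub, add_zero, zero_add, neg_zero, neg_neg, pd_zero]
    simp only [hB 1 2, hB 2 1, h2g 1 2, h2g 2 1, h2f 1 2, h2f 2 1,
      h1f 0, h1f 1, h1f 2, h1g 0, h1g 1, h1g 2, hSsq 2 1, hSu 2 1, hSφ 2 1]
    field_simp
    ring
  · -- imJ part
    simp only [Dq, qpd_re, qpd_imI, qpd_imJ, qpd_imK, Quaternion.re_add, Quaternion.imI_add, Quaternion.imJ_add, Quaternion.imK_add,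
      Quaternion.re_mul, Quaternion.imI_mul, Quaternion.imJ_mul, Quaternion.imK_mul,
      Quaternion.re_sub, Quaternion.imI_sub, Quaternion.imJ_sub, Quaternion.imK_sub,
      Quaternion.re_neg, Quaternion.imI_neg, Quaternion.imJ_neg, Quaternion.imK_neg,
      Quaternion.re_smul, Quaternion.imI_smul, Quaternion.imJ_smul, Quaternion.imK_smul,
      grad, vecq_re, vecq_imI, vecq_imJ, vecq_imK, scq_re, scq_imI, scq_imJ, scq_imK, dvg,
      e1_re, e1_imI, e1_imJ, e1_imK, e2_re, e2_imI, e2_imJ, e2_imK, e3_re, e3_imI, e3_imJ, e3_imK, smul_eq_mul, one_mul, mul_one,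
      zero_mul, mul_zero, sub_zero, zero_sub, add_zero, zero_add, neg_zero, neg_neg, pd_zero]
    simp only [hB 2 0, hB 0 2, h2g 2 0, h2g 0 2, h2f 2 0, h2f 0 2,
      h1f 0, h1f 1, h1f 2, h1g 0, h1g 1, h1g 2, hSsq 2 0, hSu 2 0, hSφ 2 0]
    field_simp
    ring
  · -- imK part
    simp only [Dq, qpd_re, qpd_imI, qpd_imJ, qpd_imK, Quaternion.re_add, Quaternion.imI_add, Quaternion.imJ_add, Quaternion.imK_add,
      Quaternion.re_mul, Quaternion.imI_mul, Quaternion.imJ_mul, Quaternion.imK_mul,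
      Quaternion.re_sub, Quaternion.imI_sub, Quaternion.imJ_sub, Quaternion.imK_sub,
      Quaternion.re_neg, Quaternion.imI_neg, Quaternion.imJ_neg, Quaternion.imK_neg,
      Quaternion.re_smul, Quaternion.imI_smul, Quaternion.imJ_smul, Quaternion.imK_smul,
      grad, vecq_re, vecq_imI, vecq_imJ, vecq_imK, scq_re, scq_imI, scq_imJ, scq_imK, dvg,
      e1_re, e1_imI, e1_imJ, e1_imK, e2_re, e2_imI, e2_imJ, e2_imK, e3_re, e3_imI, e3_imJ, e3_imK, smul_eq_mul, one_mul, mul_one,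
      zero_mul, mul_zero, sub_zero, zero_sub, add_zero, zero_add, neg_zero, neg_neg, pd_zero]
    simp only [hB 0 1, hB 1 0, h2g 0 1, h2g 1 0, h2f 0 1, h2f 1 0,
      h1f 0, h1f 1, h1f 2, h1g 0, h1g 1, h1g 2, hSsq 1 0, hSu 1 0, hSφ 1 0]
    field_simp
    ring
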